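/- Let A be a τ-tilting finite finite-dimensional k-algebra and e an idempotent of A. Then the idempotent truncation eAe is τ-tilting finite. -/

import Mathlib

/-- A brick: a (finite-dimensional) module all of whose nonzero endomorphisms
are invertible. -/
def IsBrick (A : Type) [Ring A] (M : ModuleCat.{0} A) : Prop :=
  Module.Finite A M ∧ Nontrivial M ∧ ∀ f : M →ₗ[A] M, f ≠ 0 → Function.Bijective f

/-- τ-tilting finiteness, via the Demonet–Iyama–Jasso characterization:
there are only finitely many isomorphism classes of bricks. -/
def IsTauTiltingFinite (A : Type) [Ring A] : Prop :=
  ∃ (n : ℕ) (M : Fin n → ModuleCat.{0} A),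
    ∀ N : ModuleCat.{0} A, IsBrick A N → ∃ i, Nonempty (N ≃ₗ[A] M i)

section Corner

variable {A : Type} [Ring A]

/-- The corner `eAe` of a ring `A` at an element `e`, as an additive subgroup. -/
def cornerAddSubgroup (e : A) : AddSubgroup A where
  carrier := {x | e * x * e = x}
  add_mem' := by
    intro x y hx hy
    simp only [Set.mem_setOf_eq] at *
    rw [mul_add, add_mul, hx, hy]
  zero_mem' := by simp
  neg_mem' := by
    intro x hx
    simp only [Set.mem_setOf_eq] at *
    rw [mul_neg, neg_mul, hx]

/-- The corner `eAe` of a ring `A` at an element `e`. -/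
abbrev Corner (e : A) : Type := ↥(cornerAddSubgroup e)

instance {e : A} : AddCommGroup (Corner e) :=
  inferInstanceAs (AddCommGroup (cornerAddSubgroup e))

variable {e : A}

private lemma Corner.mem (x : Corner e) : e * (x : A) * e = (x : A) := x.2

private lemma Corner.eMul (he : IsIdempotentElem e) (x : Corner e) :
    e * (x : A) = (x : A) := by
  conv_lhs => rw [← Corner.mem x]
  rw [← mul_assoc, ← mul_assoc, he.eq]
  exact Corner.mem x

private lemma Corner.mulE (he : IsIdempotentElem e) (x : Corner e) :
    (x : A) * e = (x : A) := by
  conv_lhs => rw [← Corner.mem x]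
  rw [mul_assoc, he.eq]
  exact Corner.mem x

/-- The ring structure on the corner `eAe` (with unit `e`), for an idempotent `e`. -/
def cornerRing (he : IsIdempotentElem e) : Ring (Corner e) :=
  { (inferInstance : AddCommGroup (Corner e)) with
    mul := fun x y => ⟨(x : A) * y, by
      show e * ((x : A) * y) * e = (x : A) * y
      rw [← mul_assoc e (x : A) y, Corner.eMul he x, mul_assoc, Corner.mulE he y]⟩
    one := ⟨e, by show e * e * e = e; rw [he.eq, he.eq]⟩
    mul_assoc := fun x y z => Subtype.ext (mul_assoc (x : A) y z)
    one_mul := fun x => Subtype.ext (Corner.eMul he x)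
    mul_one := fun x => Subtype.ext (Corner.mulE he x)
    left_distrib := fun x y z => Subtype.ext (mul_add (x : A) y z)
    right_distrib := fun x y z => Subtype.ext (add_mul (x : A) y z)
    zero_mul := fun x => Subtype.ext (zero_mul (x : A))
    mul_zero := fun x => Subtype.ext (mul_zero (x : A)) }

end Corner

section TauCornerProof

set_option synthInstance.maxHeartbeats 1000000
set_option maxHeartbeats 1600000

variable {A : Type} [Ring A] {e : A} [hef : Fact (IsIdempotentElem e)]

noncomputable instance cornerRingI : Ring (Corner e) := cornerRing hef.out

private lemma corner_coe_mul (x y : Corner e) : ((x * y : Corner e) : A) = (x : A) * y := rfl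
private lemma corner_coe_one : ((1 : Corner e) : A) = e := rfl
private lemma corner_coe_add (x y : Corner e) : ((x + y : Corner e) : A) = (x : A) + y := rfl

private lemma eMulE (x : A) : e * (e * x) = e * x := by rw [← mul_assoc, hef.out.eq]
private lemma mulEE (x : A) : x * e * e = x * e := by rw [mul_assoc, hef.out.eq]
private lemma eMulC (c : Corner e) (x : A) : e * ((c : A) * x) = (c : A) * x := by
  rw [← mul_assoc, Corner.eMul hef.out]
private lemma cMulE2 (c : Corner e) (x : A) : (c : A) * (e * x) = (c : A) * x := by
  rw [← mul_assoc, Corner.mulE hef.out]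

/-- `eV` as an additive subgroup of `V`. -/
def eFix (e : A) (V : Type) [AddCommGroup V] [Module A V] : AddSubgroup V where
  carrier := {m | e • m = m}
  add_mem' := by
    intro x y hx hy
    simp only [Set.mem_setOf_eq, smul_add] at *
    rw [hx, hy]
  zero_mem' := by simp
  neg_mem' := by
    intro x hx
    simp only [Set.mem_setOf_eq, smul_neg] at *
    rw [hx]

variable (V : Type) [AddCommGroup V] [Module A V]

instance eFixModule : Module (Corner e) (eFix e V) where
  smul c m := ⟨(c : A) • (m : V), by
    show e • ((c : A) • (m : V)) = (c : A) • (m : V)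
    rw [← mul_smul, Corner.eMul hef.out]⟩
  one_smul m := Subtype.ext (by
    show ((1 : Corner e) : A) • (m : V) = (m : V)
    rw [corner_coe_one]; exact m.2)
  mul_smul c d m := Subtype.ext (by
    show ((c * d : Corner e) : A) • (m : V) = (c : A) • ((d : A) • (m : V))
    rw [corner_coe_mul, mul_smul])
  smul_zero c := Subtype.ext (smul_zero (c : A))
  smul_add c m n := Subtype.ext (smul_add (c : A) (m : V) (n : V))
  add_smul c d m := Subtype.ext (by
    show ((c + d : Corner e) : A) • (m : V) = (c : A) • (m : V) + (d : A) • (m : V)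
    rw [corner_coe_add, add_smul])
  zero_smul m := Subtype.ext (by
    show ((0 : Corner e) : A) • (m : V) = 0
    show (0 : A) • (m : V) = 0
    rw [zero_smul])

lemma eFix_smul_coe (c : Corner e) (m : eFix e V) :
    ((c • m : eFix e V) : V) = (c : A) • (m : V) := rfl

variable {V}
variable {W : Type} [AddCommGroup W] [Module A W]

/-- An `A`-linear map restricts to a `Corner e`-linear map on `eFix`. -/
def eFixMap (f : V →ₗ[A] W) : eFix e V →ₗ[Corner e] eFix e W where
  toFun m := ⟨f m, by
    show e • f (m : V) = f (m : V)
    rw [← map_smul, m.2]⟩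
  map_add' m n := Subtype.ext (by simpa using f.map_add m n)
  map_smul' c m := Subtype.ext (by
    show f ((c : A) • (m : V)) = (c : A) • f (m : V)
    exact f.map_smul (c : A) (m : V))

/-- An `A`-linear equivalence restricts to a `Corner e`-linear equivalence on `eFix`. -/
noncomputable def eFixEquiv (u : V ≃ₗ[A] W) : eFix e V ≃ₗ[Corner e] eFix e W :=
  LinearEquiv.ofLinear (eFixMap u.toLinearMap) (eFixMap u.symm.toLinearMap)
    (by ext m; exact u.apply_symm_apply _)
    (by ext m; exact u.symm_apply_apply _)

variable (N : Type) [AddCommGroup N] [Module (Corner e) N]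

instance fSMul : SMul A (A →+ N) :=
  ⟨fun b φ =>
    { toFun := fun a => φ (a * b)
      map_zero' := by simp
      map_add' := fun x y => by show φ ((x + y) * b) = φ (x * b) + φ (y * b); rw [add_mul, map_add] }⟩

lemma fsmul_apply (b : A) (φ : A →+ N) (a : A) : (b • φ) a = φ (a * b) := rfl

instance fModule : Module A (A →+ N) where
  one_smul φ := AddMonoidHom.ext fun a => by rw [fsmul_apply, mul_one]
  mul_smul b c φ := AddMonoidHom.ext fun a => by
    rw [fsmul_apply, fsmul_apply, fsmul_apply, mul_assoc]
  smul_zero b := AddMonoidHom.ext fun a => rfl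
  smul_add b φ ψ := AddMonoidHom.ext fun a => rfl
  add_smul b c φ := AddMonoidHom.ext fun a => by
    show φ (a * (b + c)) = φ (a * b) + φ (a * c)
    rw [mul_add, map_add]
  zero_smul φ := AddMonoidHom.ext fun a => by
    show φ (a * 0) = 0
    rw [mul_zero, map_zero]

/-- The submodule of `Hom_{eAe}(eA, N)` inside `A →+ N`. -/
def hSub : Submodule A (A →+ N) where
  carrier := {φ | (∀ a, φ (e * a) = φ a) ∧ ∀ (c : Corner e) (a : A), φ ((c : A) * a) = c • φ a}
  add_mem' := fun hx hy =>
    ⟨fun a => by simp [hx.1 a, hy.1 a], fun c a => by simp [hx.2 c a, hy.2 c a, smul_add]⟩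
  zero_mem' := ⟨fun a => rfl, fun c a => (smul_zero c).symm⟩
  smul_mem' := fun b φ hφ =>
    ⟨fun a => by rw [fsmul_apply, fsmul_apply, mul_assoc]; exact hφ.1 (a * b),
     fun c a => by rw [fsmul_apply, fsmul_apply, mul_assoc]; exact hφ.2 c (a * b)⟩

variable {N}

/-- `eae` as an element of the corner. -/
def toCorner (a : A) : Corner e := ⟨e * a * e, by
  show e * (e * a * e) * e = e * a * e
  simp only [mul_assoc, hef.out.eq, eMulE]⟩

@[simp] lemma toCorner_coe (a : A) : ((toCorner a : Corner e) : A) = e * a * e := rfl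

lemma toCorner_e : (toCorner e : Corner e) = 1 :=
  Subtype.ext (by rw [toCorner_coe, hef.out.eq, hef.out.eq, corner_coe_one])

/-- The unit map `N → (A →+ N)`. -/
noncomputable def etaFun (n : N) : A →+ N where
  toFun a := (toCorner a : Corner e) • n
  map_zero' := by
    have h0 : (toCorner (0 : A) : Corner e) = 0 := Subtype.ext (by simp)
    show (toCorner (0 : A) : Corner e) • n = 0
    rw [h0]; exact Module.zero_smul n
  map_add' x y := by
    have hadd : (toCorner (x + y) : Corner e) = toCorner x + toCorner y :=
      Subtype.ext (by simp [mul_add, add_mul])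
    show (toCorner (x + y) : Corner e) • n = (toCorner x : Corner e) • n + (toCorner y : Corner e) • n
    rw [hadd]; exact add_smul _ _ n

lemma etaFun_apply (n : N) (a : A) : etaFun (e := e) n a = (toCorner a : Corner e) • n := rfl

lemma etaFun_mem_hSub (n : N) : etaFun (e := e) n ∈ hSub (e := e) N := by
  constructor
  · intro a
    have : (toCorner (e * a) : Corner e) = toCorner a := Subtype.ext (by
      rw [toCorner_coe, toCorner_coe, eMulE])
    rw [etaFun_apply, etaFun_apply, this]
  · intro c a
    have : (toCorner ((c : A) * a) : Corner e) = c * toCorner a := Subtype.ext (by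
      rw [toCorner_coe, corner_coe_mul, toCorner_coe]
      simp only [mul_assoc, eMulC, cMulE2, Corner.eMul hef.out, Corner.mulE hef.out])
    rw [etaFun_apply, etaFun_apply, this, mul_smul]

lemma etaFun_smul (c : Corner e) (n : N) : etaFun (e := e) (c • n) = (c : A) • etaFun (e := e) n := by
  ext a
  rw [fsmul_apply, etaFun_apply, etaFun_apply, ← mul_smul]
  congr 1
  exact Subtype.ext (by
    rw [corner_coe_mul, toCorner_coe, toCorner_coe]
    simp only [mul_assoc, eMulC, cMulE2, Corner.eMul hef.out, Corner.mulE hef.out])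

variable (N) in
/-- The intermediate extension of `N`, as a submodule of `A →+ N`. -/
def mSub : Submodule A (A →+ N) := Submodule.span A (Set.range (etaFun (e := e) (N := N)))

lemma mSub_le_hSub : mSub (e := e) N ≤ hSub (e := e) N := by
  rw [mSub, Submodule.span_le]
  rintro _ ⟨n, rfl⟩
  exact etaFun_mem_hSub n

lemma etaFun_mem_mSub (n : N) : etaFun (e := e) n ∈ mSub (e := e) N := Submodule.subset_span ⟨n, rfl⟩

lemma e_smul_etaFun (n : N) : e • etaFun (e := e) n = etaFun (e := e) n := by
  ext a
  rw [fsmul_apply, etaFun_apply, etaFun_apply]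
  congr 1
  exact Subtype.ext (by rw [toCorner_coe, toCorner_coe, mul_assoc e (a * e) e, mulEE, ← mul_assoc])

/-- The unit map as a linear map into `eFix e ↥(mSub (e := e) N)`. -/
noncomputable def etaL : N →ₗ[Corner e] eFix e ↥(mSub (e := e) N) where
  toFun n := ⟨⟨etaFun (e := e) n, etaFun_mem_mSub n⟩, by
    show e • (⟨etaFun (e := e) n, _⟩ : ↥(mSub (e := e) N)) = _
    exact Subtype.ext (e_smul_etaFun (e := e) n)⟩
  map_add' m n := by
    apply Subtype.ext; apply Subtype.ext
    ext a
    simp [etaFun_apply, smul_add]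
  map_smul' c n := by
    apply Subtype.ext; apply Subtype.ext
    show etaFun (e := e) (c • n) = (c : A) • etaFun (e := e) n
    exact etaFun_smul c n

lemma etaL_injective : Function.Injective (etaL (e := e) (N := N)) := by
  intro m n h
  have h2 : etaFun (e := e) m = etaFun (e := e) n := congrArg (fun x : eFix e ↥(mSub (e := e) N) => ((x : ↥(mSub (e := e) N)) : A →+ N)) h
  have := congrArg (fun φ : A →+ N => φ e) h2
  simpa [etaFun_apply, toCorner_e] using this

lemma etaL_surjective : Function.Surjective (etaL (e := e) (N := N)) := by
  rintro ⟨⟨φ, hφM⟩, hfix⟩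
  have hφH := mSub_le_hSub hφM
  have hre : ∀ a, φ (a * e) = φ a := by
    intro a
    have hfix' : e • (⟨φ, hφM⟩ : ↥(mSub (e := e) N)) = ⟨φ, hφM⟩ := hfix
    have h2 : e • φ = φ := congrArg (fun y : ↥(mSub (e := e) N) => (y : A →+ N)) hfix'
    exact congrArg (fun ψ : A →+ N => ψ a) h2
  refine ⟨φ e, ?_⟩
  apply Subtype.ext; apply Subtype.ext
  show etaFun (e := e) (φ e) = φ
  ext a
  rw [etaFun_apply, ← hφH.2 (toCorner a) e, toCorner_coe, mulEE, mul_assoc e a e,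
    hφH.1 (a * e), hre a]

/-- The isomorphism `N ≃ eM`. -/
noncomputable def etaEquiv : N ≃ₗ[Corner e] eFix e ↥(mSub (e := e) N) :=
  LinearEquiv.ofBijective etaL ⟨etaL_injective, etaL_surjective⟩

lemma mSub_no_e_torsion (x : ↥(mSub (e := e) N)) (hx : ∀ a : A, e • (a • x) = 0) : x = 0 := by
  apply Subtype.ext
  ext a
  have h1 : e • (a • (x : A →+ N)) = 0 := by
    have := congrArg (fun y : ↥(mSub (e := e) N) => (y : A →+ N)) (hx a)
    simpa using this
  have h2 := congrArg (fun ψ : A →+ N => ψ e) h1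
  simp only [fsmul_apply] at h2
  have h3 : (x : A →+ N) (e * e * a) = 0 := h2
  rw [hef.out.eq] at h3
  have hφH := mSub_le_hSub x.2
  rw [hφH.1 a] at h3
  exact h3

lemma mSub_eq_zero_of_eta (f : ↥(mSub (e := e) N) →ₗ[A] ↥(mSub (e := e) N))
    (hf : ∀ n : N, f ⟨etaFun (e := e) n, etaFun_mem_mSub n⟩ = 0) : f = 0 := by
  apply LinearMap.ext
  rintro ⟨φ, hφ⟩
  rw [LinearMap.zero_apply]
  induction hφ using Submodule.span_induction with
  | mem ψ h =>
    obtain ⟨n, rfl⟩ := h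
    exact hf n
  | zero => exact map_zero f
  | add ψ χ h1 h2 ih1 ih2 =>
    have : (⟨ψ + χ, Submodule.add_mem _ h1 h2⟩ : ↥(mSub (e := e) N)) = ⟨ψ, h1⟩ + ⟨χ, h2⟩ := rfl
    rw [this, map_add, ih1, ih2, add_zero]
  | smul b ψ h ih =>
    have : (⟨b • ψ, Submodule.smul_mem _ b h⟩ : ↥(mSub (e := e) N)) = b • (⟨ψ, h⟩ : ↥(mSub (e := e) N)) := rfl
    rw [this, map_smul, ih, smul_zero]

lemma mSub_finite [hN : Module.Finite (Corner e) N] : Module.Finite A ↥(mSub (e := e) N) := by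
  classical
  obtain ⟨S, hS⟩ := Module.finite_def.mp hN
  rw [Module.Finite.iff_fg]
  refine ⟨S.image (etaFun (e := e)), le_antisymm ?_ ?_⟩
  · rw [Submodule.span_le, Finset.coe_image]
    exact Set.image_subset_iff.mpr fun n _ => Submodule.subset_span ⟨n, rfl⟩
  · rw [mSub, Submodule.span_le]
    rintro _ ⟨n, rfl⟩
    have hn : n ∈ Submodule.span (Corner e) (S : Set N) := hS ▸ Submodule.mem_top
    induction hn using Submodule.span_induction with
    | mem m h => exact Submodule.subset_span (Finset.mem_coe.mpr (Finset.mem_image_of_mem _ h))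
    | zero =>
      have : etaFun (e := e) (0 : N) = 0 := by ext a; simp [etaFun_apply]
      rw [this]; exact Submodule.zero_mem _
    | add m m' _ _ ih ih' =>
      have : etaFun (e := e) (m + m') = etaFun (e := e) m + etaFun (e := e) m' := by
        ext a; simp [etaFun_apply, smul_add]
      rw [this]; exact Submodule.add_mem _ ih ih'
    | smul c m _ ih =>
      rw [etaFun_smul]
      exact Submodule.smul_mem _ _ ih

lemma mSub_brick [IsArtinianRing A] (hN : Module.Finite (Corner e) N) (hNt : Nontrivial N)
    (hNb : ∀ g : N →ₗ[Corner e] N, g ≠ 0 → Function.Bijective g) :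
    IsBrick A (ModuleCat.of A ↥(mSub (e := e) N)) := by
  haveI := hN
  haveI : Module.Finite A ↥(mSub (e := e) N) := mSub_finite
  refine ⟨mSub_finite, ?_, ?_⟩
  · -- Nontrivial
    obtain ⟨n, m, hnm⟩ := hNt
    refine ⟨⟨etaFun (e := e) n, etaFun_mem_mSub n⟩, ⟨etaFun (e := e) m, etaFun_mem_mSub m⟩, ?_⟩
    intro hcon
    exact hnm (etaL_injective (e := e) (Subtype.ext hcon))
  · intro f hf
    set ε := etaEquiv (e := e) (N := N) with hε
    set g : N →ₗ[Corner e] N :=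
      (ε.symm.toLinearMap.comp (eFixMap (e := e) f)).comp ε.toLinearMap with hg
    have hgne : g ≠ 0 := by
      intro h0
      apply hf
      apply mSub_eq_zero_of_eta f
      intro n
      have h1 : ε.symm (eFixMap (e := e) f (ε n)) = 0 := by
        have := congrArg (fun h : N →ₗ[Corner e] N => h n) h0
        simpa [hg] using this
      have h2 : eFixMap (e := e) f (ε n) = 0 :=
        ε.symm.injective (by rw [h1, map_zero])
      have h3 : f ((ε n : eFix e ↥(mSub (e := e) N)) : ↥(mSub (e := e) N)) = 0 :=
        congrArg (fun x : eFix e ↥(mSub (e := e) N) => (x : ↥(mSub (e := e) N))) h2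
      exact h3
    have hgb := hNb g hgne
    have hinj : Function.Injective (eFixMap (e := e) f) := by
      intro u v huv
      have h2 : g (ε.symm u) = g (ε.symm v) := by
        show ε.symm (eFixMap (e := e) f (ε (ε.symm u))) =
          ε.symm (eFixMap (e := e) f (ε (ε.symm v)))
        rw [ε.apply_symm_apply, ε.apply_symm_apply, huv]
      exact ε.symm.injective (hgb.injective h2)
    have hfinj : Function.Injective f := by
      have hker : ∀ z : ↥(mSub (e := e) N), f z = 0 → z = 0 := by
        intro z hz
        apply mSub_no_e_torsion
        intro a
        have hmem : e • (a • z) ∈ eFix e ↥(mSub (e := e) N) := by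
          show e • (e • (a • z)) = e • (a • z)
          rw [← mul_smul, hef.out.eq]
        have h1 : eFixMap (e := e) f ⟨e • (a • z), hmem⟩ = 0 := by
          apply Subtype.ext
          show f (e • (a • z)) = 0
          rw [map_smul, map_smul, hz, smul_zero, smul_zero]
        have h2 : (⟨e • (a • z), hmem⟩ : eFix e ↥(mSub (e := e) N)) = 0 := by
          apply hinj
          rw [h1, map_zero]
        exact congrArg (fun x : eFix e ↥(mSub (e := e) N) => (x : ↥(mSub (e := e) N))) h2
      intro x y hxy
      have := hker (x - y) (by rw [map_sub, hxy, sub_self])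
      rwa [sub_eq_zero] at this
    haveI : IsArtinian A ↥(mSub (e := e) N) := isArtinian_of_fg_of_artinian'
    exact ⟨hfinj, IsArtinian.surjective_of_injective_endomorphism
      (R := A) (M := ↥(mSub (e := e) N)) f hfinj⟩

end TauCornerProof


set_option synthInstance.maxHeartbeats 1000000 in
set_option maxHeartbeats 1600000 in
theorem stmt8 (k A : Type) [Field k] [IsAlgClosed k]
    [Ring A] [Algebra k A] [FiniteDimensional k A]
    (h : IsTauTiltingFinite A) (e : A) (he : IsIdempotentElem e) :
    @IsTauTiltingFinite (Corner e) (cornerRing he) := by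
  haveI hef : Fact (IsIdempotentElem e) := ⟨he⟩
  haveI : IsArtinian k A := inferInstance
  haveI : IsArtinianRing A := isArtinian_of_tower k inferInstance
  obtain ⟨n, M, hM⟩ := h
  refine ⟨n, fun i => ModuleCat.of (Corner e) (eFix e (M i)), ?_⟩
  intro N hN
  obtain ⟨hfin, hnt, hb⟩ := hN
  have hbrick : IsBrick A (ModuleCat.of A ↥(mSub (e := e) (↑N : Type))) :=
    mSub_brick (N := (↑N : Type)) hfin hnt hb
  obtain ⟨i, ⟨u⟩⟩ := hM (ModuleCat.of A ↥(mSub (e := e) (↑N : Type))) hbrick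
  exact ⟨i, ⟨(etaEquiv (e := e) (N := (↑N : Type))).trans (eFixEquiv (e := e) u)⟩⟩
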